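/- (Katona's generalization of Kruskal–Katona) If f : ℕ → ℝ is monotone non-increasing and F ⊆ 2^[n] is a hereditary family with |F| = m, then Σ_{F ∈ F} f(|F|) ≥ Σ_{R ∈ R(m)} f(|R|), where R(m) denotes the first m finite subsets of the positive integers in colexicographic order. -/

import Mathlib

/-- The colexicographic value of a finite set of positive integers: the set `S`
is the `colexVal S`-th finite subset of `ℕ⁺` in colexicographic order
(where `A` precedes `B` iff `max (A △ B) ∈ B`). -/
def colexVal (S : Finset ℕ) : ℕ := ∑ i ∈ S, 2 ^ (i - 1)

/-- `Rfam m` is the family of the first `m` finite subsets of `ℕ⁺` in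
colexicographic order. -/
def Rfam (m : ℕ) : Finset (Finset ℕ) :=
  (Finset.Icc 1 m).powerset.filter (fun S => colexVal S < m)

/-- Number of ones in the binary expansion of `j`. -/
def cnt (j : ℕ) : ℕ := j.bitIndices.length

lemma cnt_zero : cnt 0 = 0 := by simp [cnt]

lemma cnt_two_mul (i : ℕ) : cnt (2 * i) = cnt i := by simp [cnt]

lemma cnt_two_mul_add_one (i : ℕ) : cnt (2 * i + 1) = cnt i + 1 := by simp [cnt]

/-- The set of (1-shifted) bit indices of `j`. -/
def bitSet (j : ℕ) : Finset ℕ := j.bitIndices.toFinset.image (· + 1)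

lemma card_bitSet (j : ℕ) : (bitSet j).card = cnt j := by
  rw [bitSet, Finset.card_image_of_injective _ (add_left_injective 1),
    List.card_toFinset, Nat.bitIndices_sorted.nodup.dedup]
  rfl

lemma colexVal_bitSet (j : ℕ) : colexVal (bitSet j) = j := by
  rw [colexVal, bitSet, Finset.sum_image (by intro x _ y _ h; simp only at h; omega)]
  simp

lemma bitSet_colexVal {S : Finset ℕ} (hS : 0 ∉ S) : bitSet (colexVal S) = S := by
  have h : colexVal S = ∑ i ∈ S.image (· - 1), 2 ^ i := by
    rw [colexVal, Finset.sum_image]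
    intro x hx y hy hxy
    have hx1 : 1 ≤ x := Nat.one_le_iff_ne_zero.2 (fun h => hS (h ▸ hx))
    have hy1 : 1 ≤ y := Nat.one_le_iff_ne_zero.2 (fun h => hS (h ▸ hy))
    simp only at hxy
    omega
  rw [bitSet, h, Finset.toFinset_bitIndices_twoPowSum, Finset.image_image]
  ext x
  simp only [Finset.mem_image, Function.comp_apply]
  constructor
  · rintro ⟨a, ha, rfl⟩
    have ha1 : 1 ≤ a := Nat.one_le_iff_ne_zero.2 (fun h => hS (h ▸ ha))
    have : a - 1 + 1 = a := by omega
    rwa [this]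
  · intro hx
    have hx1 : 1 ≤ x := Nat.one_le_iff_ne_zero.2 (fun h => hS (h ▸ hx))
    exact ⟨x, hx, by omega⟩

lemma mem_Rfam {m : ℕ} {S : Finset ℕ} :
    S ∈ Rfam m ↔ S ⊆ Finset.Icc 1 m ∧ colexVal S < m := by
  simp [Rfam, Finset.mem_filter, Finset.mem_powerset]

lemma bitSet_mem_Rfam {m j : ℕ} (hj : j < m) : bitSet j ∈ Rfam m := by
  rw [mem_Rfam]
  refine ⟨?_, by rw [colexVal_bitSet]; exact hj⟩
  intro x hx
  simp only [bitSet, Finset.mem_image, List.mem_toFinset] at hx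
  obtain ⟨i, hi, rfl⟩ := hx
  have h2 : 2 ^ i ≤ j := Nat.two_pow_le_of_mem_bitIndices hi
  have h3 : i < 2 ^ i := Nat.lt_two_pow_self
  simp only [Finset.mem_Icc]
  omega

/-- The sum over `Rfam m` equals the sum over binary representations. -/
lemma sum_Rfam (f : ℕ → ℝ) (m : ℕ) :
    ∑ R ∈ Rfam m, f R.card = ∑ j ∈ Finset.range m, f (cnt j) := by
  refine Finset.sum_nbij' (fun S => colexVal S) (fun j => bitSet j) ?_ ?_ ?_ ?_ ?_
  · intro S hS
    rw [mem_Rfam] at hS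
    exact Finset.mem_range.2 hS.2
  · intro j hj
    exact bitSet_mem_Rfam (Finset.mem_range.1 hj)
  · intro S hS
    rw [mem_Rfam] at hS
    have h0 : 0 ∉ S := fun h0 => by simpa using hS.1 h0
    exact bitSet_colexVal h0
  · intro j _
    exact colexVal_bitSet j
  · intro S hS
    rw [mem_Rfam] at hS
    have h0 : 0 ∉ S := fun h0 => by simpa using hS.1 h0
    have h1 : cnt (colexVal S) = S.card := by
      conv_lhs => rw [← card_bitSet, bitSet_colexVal h0]
    rw [h1]

lemma sum_cnt_double (f : ℕ → ℝ) (m : ℕ) :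
    ∑ j ∈ Finset.range (2 * m), f (cnt j) =
      ∑ j ∈ Finset.range m, f (cnt j) + ∑ j ∈ Finset.range m, f (cnt j + 1) := by
  induction m with
  | zero => simp
  | succ m ih =>
    have h2 : 2 * (m + 1) = 2 * m + 1 + 1 := by ring
    rw [h2, Finset.sum_range_succ, Finset.sum_range_succ, Finset.sum_range_succ,
      Finset.sum_range_succ, ih, cnt_two_mul, cnt_two_mul_add_one]
    ring

lemma sum_cnt_odd (f : ℕ → ℝ) (m : ℕ) :
    ∑ j ∈ Finset.range (2 * m + 1), f (cnt j) =
      ∑ j ∈ Finset.range (m + 1), f (cnt j) + ∑ j ∈ Finset.range m, f (cnt j + 1) := by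
  rw [Finset.sum_range_succ, sum_cnt_double, Finset.sum_range_succ, cnt_two_mul]
  ring

lemma sum_cnt_double' (f : ℕ → ℝ) (m : ℕ) :
    ∑ j ∈ Finset.range (2 * m), f (cnt j + 1) =
      ∑ j ∈ Finset.range m, f (cnt j + 1) + ∑ j ∈ Finset.range m, f (cnt j + 1 + 1) := by
  simpa using sum_cnt_double (fun k => f (k + 1)) m

lemma sum_cnt_odd' (f : ℕ → ℝ) (m : ℕ) :
    ∑ j ∈ Finset.range (2 * m + 1), f (cnt j + 1) =
      ∑ j ∈ Finset.range (m + 1), f (cnt j + 1) + ∑ j ∈ Finset.range m, f (cnt j + 1 + 1) := by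
  simpa using sum_cnt_odd (fun k => f (k + 1)) m

/-- The key merging inequality for the colex weight function. -/
lemma key (N : ℕ) : ∀ a b (f : ℕ → ℝ), a + b ≤ N → b ≤ a →
    (∀ i j : ℕ, i ≤ j → f j ≤ f i) →
    ∑ j ∈ Finset.range (a + b), f (cnt j) ≤
      ∑ j ∈ Finset.range a, f (cnt j) + ∑ j ∈ Finset.range b, f (cnt j + 1) := by
  induction N with
  | zero =>
    intro a b f hab hba hf
    have : a = 0 ∧ b = 0 := by omega
    simp [this.1, this.2]
  | succ N ih =>
    intro a b f hab hba hf
    have hf' : ∀ i j : ℕ, i ≤ j → f (j + 1) ≤ f (i + 1) := fun i j h => hf _ _ (by omega)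
    rcases Nat.eq_or_lt_of_le hba with heq | hlt
    · -- a = b : equality via the doubling identity
      subst heq
      have : b + b = 2 * b := by ring
      rw [this, sum_cnt_double]
    rcases Nat.eq_zero_or_pos b with hb0 | hb1
    · subst hb0; simp
    obtain ⟨a', ha⟩ := Nat.even_or_odd' a
    obtain ⟨b', hb⟩ := Nat.even_or_odd' b
    rcases ha with rfl | rfl <;> rcases hb with rfl | rfl
    · -- a = 2a', b = 2b'
      have hsum : 2 * a' + 2 * b' = 2 * (a' + b') := by ring
      rw [hsum, sum_cnt_double, sum_cnt_double, sum_cnt_double']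
      have h1 := ih a' b' f (by omega) (by omega) hf
      have h2 := ih a' b' (fun k => f (k + 1)) (by omega) (by omega) hf'
      calc ∑ j ∈ Finset.range (a' + b'), f (cnt j)
            + ∑ j ∈ Finset.range (a' + b'), f (cnt j + 1)
          ≤ (∑ j ∈ Finset.range a', f (cnt j) + ∑ j ∈ Finset.range b', f (cnt j + 1))
            + (∑ j ∈ Finset.range a', f (cnt j + 1) + ∑ j ∈ Finset.range b', f (cnt j + 1 + 1)) :=
            add_le_add h1 h2
        _ = _ := by ring
    · -- a = 2a', b = 2b'+1, so b'+1 ≤ a'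
      have hb'a : b' + 1 ≤ a' := by omega
      have hsum : 2 * a' + (2 * b' + 1) = 2 * (a' + b') + 1 := by ring
      rw [hsum, sum_cnt_odd, sum_cnt_double, sum_cnt_odd']
      have hab1 : a' + b' + 1 = a' + (b' + 1) := by ring
      have h1 := ih a' (b' + 1) f (by omega) (by omega) hf
      rw [← hab1] at h1
      have h2 := ih a' b' (fun k => f (k + 1)) (by omega) (by omega) hf'
      calc ∑ j ∈ Finset.range (a' + b' + 1), f (cnt j)
            + ∑ j ∈ Finset.range (a' + b'), f (cnt j + 1)
          ≤ (∑ j ∈ Finset.range a', f (cnt j) + ∑ j ∈ Finset.range (b' + 1), f (cnt j + 1))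
            + (∑ j ∈ Finset.range a', f (cnt j + 1) + ∑ j ∈ Finset.range b', f (cnt j + 1 + 1)) :=
            add_le_add h1 h2
        _ = _ := by ring
    · -- a = 2a'+1, b = 2b', b ≥ 1 so b' ≥ 1 and b' ≤ a'
      have hb'a : b' ≤ a' := by omega
      have hsum : 2 * a' + 1 + 2 * b' = 2 * (a' + b') + 1 := by ring
      rw [hsum, sum_cnt_odd, sum_cnt_odd, sum_cnt_double']
      have hab1 : a' + b' + 1 = (a' + 1) + b' := by ring
      have h1 := ih (a' + 1) b' f (by omega) (by omega) hf
      rw [← hab1] at h1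
      have h2 := ih a' b' (fun k => f (k + 1)) (by omega) (by omega) hf'
      calc ∑ j ∈ Finset.range (a' + b' + 1), f (cnt j)
            + ∑ j ∈ Finset.range (a' + b'), f (cnt j + 1)
          ≤ (∑ j ∈ Finset.range (a' + 1), f (cnt j) + ∑ j ∈ Finset.range b', f (cnt j + 1))
            + (∑ j ∈ Finset.range a', f (cnt j + 1) + ∑ j ∈ Finset.range b', f (cnt j + 1 + 1)) :=
            add_le_add h1 h2
        _ = _ := by ring
    · -- a = 2a'+1, b = 2b'+1, b < a so b' < a'
      have hb'a : b' + 1 ≤ a' := by omega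
      have hsum : 2 * a' + 1 + (2 * b' + 1) = 2 * (a' + b' + 1) := by ring
      rw [hsum, sum_cnt_double, sum_cnt_odd, sum_cnt_odd']
      have hab1 : a' + b' + 1 = a' + (b' + 1) := by ring
      have h1 := ih a' (b' + 1) f (by omega) (by omega) hf
      rw [← hab1] at h1
      have hab2 : a' + b' + 1 = (a' + 1) + b' := by ring
      have h2 := ih (a' + 1) b' (fun k => f (k + 1)) (by omega) (by omega) hf'
      rw [← hab2] at h2
      have h3 : f (cnt a' + 1) ≤ f (cnt a') := hf _ _ (by omega)
      calc ∑ j ∈ Finset.range (a' + b' + 1), f (cnt j)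
            + ∑ j ∈ Finset.range (a' + b' + 1), f (cnt j + 1)
          ≤ (∑ j ∈ Finset.range a', f (cnt j) + ∑ j ∈ Finset.range (b' + 1), f (cnt j + 1))
            + (∑ j ∈ Finset.range (a' + 1), f (cnt j + 1)
              + ∑ j ∈ Finset.range b', f (cnt j + 1 + 1)) := add_le_add h1 h2
        _ = (∑ j ∈ Finset.range a', f (cnt j) + f (cnt a' + 1))
            + (∑ j ∈ Finset.range a', f (cnt j + 1)
              + ∑ j ∈ Finset.range (b' + 1), f (cnt j + 1)
              + ∑ j ∈ Finset.range b', f (cnt j + 1 + 1)) := by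
            rw [Finset.sum_range_succ (fun j => f (cnt j + 1)) a']; ring
        _ ≤ (∑ j ∈ Finset.range a', f (cnt j) + f (cnt a'))
            + (∑ j ∈ Finset.range a', f (cnt j + 1)
              + ∑ j ∈ Finset.range (b' + 1), f (cnt j + 1)
              + ∑ j ∈ Finset.range b', f (cnt j + 1 + 1)) := by
            gcongr
        _ = _ := by rw [Finset.sum_range_succ (fun j => f (cnt j)) a']; ring

/-- Katona's theorem for hereditary families of finite subsets of `ℕ` bounded by `N`. -/
lemma katonaNat (N : ℕ) : ∀ (𝓖 : Finset (Finset ℕ)),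
    (∀ A ∈ 𝓖, ∀ x ∈ A, x < N) → (∀ A ∈ 𝓖, ∀ B ⊆ A, B ∈ 𝓖) →
    ∀ f : ℕ → ℝ, (∀ i j : ℕ, i ≤ j → f j ≤ f i) →
    ∑ j ∈ Finset.range 𝓖.card, f (cnt j) ≤ ∑ A ∈ 𝓖, f A.card := by
  induction N with
  | zero =>
    intro 𝓖 hbd _ f hf
    have hsub : 𝓖 ⊆ {∅} := by
      intro A hA
      simp only [Finset.mem_singleton]
      ext x
      simp only [Finset.notMem_empty, iff_false]
      intro hx
      exact absurd (hbd A hA x hx) (by omega)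
    rcases Finset.subset_singleton_iff.1 hsub with rfl | rfl
    · simp
    · simp [cnt_zero]
  | succ N ih =>
    intro 𝓖 hbd hered f hf
    set 𝓖₀ := 𝓖.filter (fun A => N ∉ A) with h𝓖₀
    set 𝓖₁ := (𝓖.filter (fun A => N ∈ A)).image (fun A => A.erase N) with h𝓖₁
    have hinj : ∀ A ∈ 𝓖.filter (fun A => N ∈ A), ∀ B ∈ 𝓖.filter (fun A => N ∈ A),
        A.erase N = B.erase N → A = B := by
      intro A hA B hB hAB
      have hAN : N ∈ A := (Finset.mem_filter.1 hA).2
      have hBN : N ∈ B := (Finset.mem_filter.1 hB).2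
      rw [← Finset.insert_erase hAN, ← Finset.insert_erase hBN, hAB]
    have hcard1 : 𝓖₁.card = (𝓖.filter (fun A => N ∈ A)).card :=
      Finset.card_image_of_injOn hinj
    have hcard : 𝓖.card = 𝓖₀.card + 𝓖₁.card := by
      rw [hcard1, h𝓖₀]
      rw [← Finset.card_filter_add_card_filter_not (s := 𝓖) (p := fun A => N ∉ A)]
      simp
    have hsub01 : 𝓖₁ ⊆ 𝓖₀ := by
      intro B hB
      rw [h𝓖₁] at hB
      obtain ⟨A, hA, rfl⟩ := Finset.mem_image.1 hB
      rw [Finset.mem_filter] at hA ⊢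
      exact ⟨hered A hA.1 _ (Finset.erase_subset _ _), Finset.notMem_erase _ _⟩
    have hb0 : ∀ A ∈ 𝓖₀, ∀ x ∈ A, x < N := by
      intro A hA x hx
      rw [Finset.mem_filter] at hA
      have := hbd A hA.1 x hx
      have hxN : x ≠ N := fun h => hA.2 (h ▸ hx)
      omega
    have hb1 : ∀ A ∈ 𝓖₁, ∀ x ∈ A, x < N := fun A hA => hb0 A (hsub01 hA)
    have hh0 : ∀ A ∈ 𝓖₀, ∀ B ⊆ A, B ∈ 𝓖₀ := by
      intro A hA B hBA
      rw [Finset.mem_filter] at hA ⊢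
      exact ⟨hered A hA.1 B hBA, fun h => hA.2 (hBA h)⟩
    have hh1 : ∀ A ∈ 𝓖₁, ∀ B ⊆ A, B ∈ 𝓖₁ := by
      intro A hA B hBA
      rw [h𝓖₁] at hA ⊢
      obtain ⟨C, hC, rfl⟩ := Finset.mem_image.1 hA
      rw [Finset.mem_filter] at hC
      refine Finset.mem_image.2 ⟨insert N B, Finset.mem_filter.2 ⟨?_, Finset.mem_insert_self _ _⟩, ?_⟩
      · refine hered C hC.1 _ ?_
        intro x hx
        rcases Finset.mem_insert.1 hx with rfl | hx
        · exact hC.2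
        · exact Finset.erase_subset _ _ (hBA hx)
      · rw [Finset.erase_insert]
        intro hNB
        exact Finset.notMem_erase N C (hBA hNB)
    have ihA := ih 𝓖₀ hb0 hh0 f hf
    have ihB := ih 𝓖₁ hb1 hh1 (fun k => f (k + 1)) (fun i j h => hf _ _ (by omega))
    have hsplit : ∑ A ∈ 𝓖, f A.card =
        ∑ A ∈ 𝓖₀, f A.card + ∑ B ∈ 𝓖₁, f (B.card + 1) := by
      have h1 : ∑ B ∈ 𝓖₁, f (B.card + 1) =
          ∑ A ∈ 𝓖.filter (fun A => N ∈ A), f A.card := by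
        rw [h𝓖₁, Finset.sum_image hinj]
        refine Finset.sum_congr rfl ?_
        intro A hA
        have hAN : N ∈ A := (Finset.mem_filter.1 hA).2
        rw [Finset.card_erase_of_mem hAN]
        congr 1
        have := Finset.card_pos.2 ⟨N, hAN⟩
        omega
      rw [h1, h𝓖₀]
      rw [← Finset.sum_filter_add_sum_filter_not 𝓖 (fun A => N ∉ A) (fun A => f A.card)]
      simp
    have hkey := key 𝓖.card 𝓖₀.card 𝓖₁.card f (by omega)
      (Finset.card_le_card hsub01) hf
    rw [hcard, hsplit]
    calc ∑ j ∈ Finset.range (𝓖₀.card + 𝓖₁.card), f (cnt j)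
        ≤ ∑ j ∈ Finset.range 𝓖₀.card, f (cnt j)
          + ∑ j ∈ Finset.range 𝓖₁.card, f (cnt j + 1) := hkey
      _ ≤ ∑ A ∈ 𝓖₀, f A.card + ∑ B ∈ 𝓖₁, f (B.card + 1) := add_le_add ihA ihB

/-- Katona's generalization of the Kruskal–Katona theorem: for a monotone
non-increasing `f : ℕ → ℝ` and a hereditary family `𝓕` with `|𝓕| = m`,
`∑_{F ∈ 𝓕} f(|F|) ≥ ∑_{R ∈ R(m)} f(|R|)`. -/
theorem katona_kruskal_katona (n : ℕ) (f : ℕ → ℝ)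
    (hf : ∀ i j : ℕ, i ≤ j → f j ≤ f i)
    (𝓕 : Finset (Finset (Fin n)))
    (hered : ∀ A ∈ 𝓕, ∀ B ⊆ A, B ∈ 𝓕) :
    ∑ R ∈ Rfam 𝓕.card, f R.card ≤ ∑ A ∈ 𝓕, f A.card := by
  set 𝓖 : Finset (Finset ℕ) := 𝓕.image (fun A => A.image Fin.val) with h𝓖
  have himg : Function.Injective (fun A : Finset (Fin n) => A.image Fin.val) := by
    intro A B h
    exact Finset.image_injective Fin.val_injective h
  have hcard : 𝓖.card = 𝓕.card := Finset.card_image_of_injective _ himg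
  have hbd : ∀ A ∈ 𝓖, ∀ x ∈ A, x < n := by
    intro A hA x hx
    obtain ⟨A', _, rfl⟩ := Finset.mem_image.1 hA
    obtain ⟨a, _, rfl⟩ := Finset.mem_image.1 hx
    exact a.isLt
  have hhered : ∀ A ∈ 𝓖, ∀ B ⊆ A, B ∈ 𝓖 := by
    intro A hA B hBA
    obtain ⟨A', hA', rfl⟩ := Finset.mem_image.1 hA
    refine Finset.mem_image.2 ⟨A'.filter (fun a => (a : ℕ) ∈ B), hered A' hA' _
      (Finset.filter_subset _ _), ?_⟩
    ext x
    simp only [Finset.mem_image, Finset.mem_filter]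
    constructor
    · rintro ⟨a, ⟨_, hab⟩, rfl⟩
      exact hab
    · intro hxB
      obtain ⟨a, haA', rfl⟩ := Finset.mem_image.1 (hBA hxB)
      exact ⟨a, ⟨haA', hxB⟩, rfl⟩
  have hsum : ∑ A ∈ 𝓖, f A.card = ∑ A ∈ 𝓕, f A.card := by
    rw [h𝓖, Finset.sum_image (fun A _ B _ h => himg h)]
    refine Finset.sum_congr rfl ?_
    intro A _
    rw [Finset.card_image_of_injective _ Fin.val_injective]
  calc ∑ R ∈ Rfam 𝓕.card, f R.card
      = ∑ j ∈ Finset.range 𝓕.card, f (cnt j) := sum_Rfam f _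
    _ = ∑ j ∈ Finset.range 𝓖.card, f (cnt j) := by rw [hcard]
    _ ≤ ∑ A ∈ 𝓖, f A.card := katonaNat n 𝓖 hbd hhered f hf
    _ = ∑ A ∈ 𝓕, f A.card := hsum
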